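/- (Co-channel Taylor coefficients CV_m, equation (55)) Let (a_n) be the Prouhet–Thue–Morse sequence, M ≥ 0, N = 2^{M+1}, and β_m = Σ_{n=0}^{N−1} a_n·n^m. For complex numbers X, Y define S_{V,n} as follows: if n is even, S_{V,n} = (1−a_n)·X + a_n·(−conj(Y)); if n is odd, S_{V,n} = a_n·(−conj(Y)) + (1−a_n)·(−X). Then |S_{V,n}|² = (1−a_n)·|X|² + a_n·|Y|² for every n, and for every 0 ≤ m ≤ M, Σ_{n=0}^{N−1} n^m·|S_{V,n}|² = β_m·( |X|² + |Y|² ). -/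

import Mathlib

open scoped BigOperators

/-- (Co-channel Taylor coefficients `CV_m`, equation (55)) With `(a_n)` the PTM
sequence, `N = 2^{M+1}`, `β_m = Σ_{n<N} a_n n^m`, and `S_{V,n}` the pointwise evaluation
of the first row of the PTM-A transmit matrix (split by parity of `n`):
`|S_{V,n}|² = (1 - a_n)|X|² + a_n|Y|²` for every `n`, and for every `0 ≤ m ≤ M`,
`Σ_{n<N} n^m |S_{V,n}|² = β_m (|X|² + |Y|²)`. -/
theorem stmt18 (M : ℕ) (a : ℕ → ℕ) (ha0 : a 0 = 0)
    (hae : ∀ k, a (2 * k) = a k) (hao : ∀ k, a (2 * k + 1) = 1 - a k)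
    (X Y : ℂ) (SV : ℕ → ℂ)
    (hSVe : ∀ n, n % 2 = 0 →
      SV n = (1 - (a n : ℂ)) * X + (a n : ℂ) * (-(starRingEnd ℂ) Y))
    (hSVo : ∀ n, n % 2 = 1 →
      SV n = (a n : ℂ) * (-(starRingEnd ℂ) Y) + (1 - (a n : ℂ)) * (-X)) :
    (∀ n, ‖SV n‖ ^ 2
      = (1 - (a n : ℝ)) * ‖X‖ ^ 2 + (a n : ℝ) * ‖Y‖ ^ 2) ∧
    (∀ m ≤ M,
      ∑ n ∈ Finset.range (2 ^ (M + 1)), (n : ℝ) ^ m * ‖SV n‖ ^ 2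
        = ((∑ n ∈ Finset.range (2 ^ (M + 1)), a n * n ^ m : ℕ) : ℝ)
            * (‖X‖ ^ 2 + ‖Y‖ ^ 2)) := by
  -- a n ∈ {0, 1}
  have ha1 : ∀ n, a n ≤ 1 := by
    intro n
    induction n using Nat.strong_induction_on with
    | _ n ih =>
      rcases Nat.even_or_odd n with ⟨k, hk⟩ | ⟨k, hk⟩
      · rcases Nat.eq_zero_or_pos k with hk0 | hk0
        · simp [hk, hk0, ha0]
        · have : a n = a k := by rw [hk, ← two_mul, hae]
          rw [this]; exact ih k (by omega)
      · have : a n = 1 - a k := by rw [hk, hao]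
        rw [this]; omega
  -- the signed sequence
  set c : ℕ → ℝ := fun n => 1 - 2 * (a n : ℝ) with hc
  have hce : ∀ k, c (2 * k) = c k := by intro k; simp [hc, hae]
  have hco : ∀ k, c (2 * k + 1) = -c k := by
    intro k
    simp only [hc, hao]
    rw [Nat.cast_sub (ha1 k)]
    push_cast
    ring
  -- splitting a sum over range (2*N) by parity
  have hsplit : ∀ (f : ℕ → ℝ) (N : ℕ),
      ∑ n ∈ Finset.range (2 * N), f n
        = ∑ k ∈ Finset.range N, (f (2 * k) + f (2 * k + 1)) := by
    intro f N
    induction N with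
    | zero => simp
    | succ N ih =>
      have h2 : 2 * (N + 1) = (2 * N + 1) + 1 := by ring
      rw [h2, Finset.sum_range_succ, Finset.sum_range_succ, ih,
        Finset.sum_range_succ]
      ring
  -- the Prouhet–Tarry–Escott property
  have hT : ∀ M' : ℕ, ∀ m ≤ M',
      ∑ n ∈ Finset.range (2 ^ (M' + 1)), c n * (n : ℝ) ^ m = 0 := by
    intro M'
    induction M' with
    | zero =>
      intro m hm
      have hm0 : m = 0 := Nat.le_zero.mp hm
      have h1 : a 1 = 1 := by have := hao 0; simpa [ha0] using this
      subst hm0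
      simp [Finset.sum_range_succ, hc, ha0, h1]
    | succ M' ih =>
      intro m hm
      have h2 : 2 ^ (M' + 1 + 1) = 2 * 2 ^ (M' + 1) := by ring
      rw [h2, hsplit]
      have key : ∀ k : ℕ,
          c (2 * k) * ((2 * k : ℕ) : ℝ) ^ m + c (2 * k + 1) * ((2 * k + 1 : ℕ) : ℝ) ^ m
            = 2 ^ m * (c k * (k : ℝ) ^ m)
              - ∑ j ∈ Finset.range (m + 1),
                  (2 : ℝ) ^ j * (m.choose j : ℝ) * (c k * (k : ℝ) ^ j) := by
        intro k
        rw [hce, hco]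
        push_cast
        rw [add_pow (2 * (k : ℝ)) 1 m, Finset.mul_sum,
          sub_eq_add_neg, ← Finset.sum_neg_distrib]
        congr 1
        · rw [mul_pow]; ring
        · apply Finset.sum_congr rfl
          intro j hj
          rw [mul_pow]
          ring
      rw [Finset.sum_congr rfl fun k _ => key k]
      rw [Finset.sum_sub_distrib, ← Finset.mul_sum]
      rw [Finset.sum_comm]
      have hz : ∀ j ∈ Finset.range (m + 1), j ≠ m →
          ∑ k ∈ Finset.range (2 ^ (M' + 1)),
            (2 : ℝ) ^ j * (m.choose j : ℝ) * (c k * (k : ℝ) ^ j) = 0 := by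
        intro j hj hjm
        have hjM : j ≤ M' := by
          simp only [Finset.mem_range] at hj; omega
        rw [← Finset.mul_sum, ih j hjM, mul_zero]
      rw [Finset.sum_eq_single_of_mem m (Finset.self_mem_range_succ m) hz]
      rw [← Finset.mul_sum]
      simp
  -- first claim
  have hpt : ∀ n, ‖SV n‖ ^ 2
      = (1 - (a n : ℝ)) * ‖X‖ ^ 2 + (a n : ℝ) * ‖Y‖ ^ 2 := by
    intro n
    have han := ha1 n
    rcases Nat.eq_zero_or_pos (a n) with h01 | h01
    · rcases Nat.even_or_odd n with hp | hp
      · have := hSVe n (Nat.even_iff.mp hp)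
        rw [this, h01]
        simp
      · have := hSVo n (Nat.odd_iff.mp hp)
        rw [this, h01]
        simp
    · have h1 : a n = 1 := by omega
      rcases Nat.even_or_odd n with hp | hp
      · have := hSVe n (Nat.even_iff.mp hp)
        rw [this, h1]
        simp
      · have := hSVo n (Nat.odd_iff.mp hp)
        rw [this, h1]
        simp
  refine ⟨hpt, ?_⟩
  intro m hm
  -- key combinatorial identity at level M
  have hTm := hT M m hm
  have hkey : ∑ n ∈ Finset.range (2 ^ (M + 1)), (1 - (a n : ℝ)) * (n : ℝ) ^ m
      = ∑ n ∈ Finset.range (2 ^ (M + 1)), (a n : ℝ) * (n : ℝ) ^ m := by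
    have : ∑ n ∈ Finset.range (2 ^ (M + 1)),
        ((1 - (a n : ℝ)) * (n : ℝ) ^ m - (a n : ℝ) * (n : ℝ) ^ m) = 0 := by
      rw [← hTm]
      apply Finset.sum_congr rfl
      intro n _
      simp only [hc]
      ring
    rw [Finset.sum_sub_distrib] at this
    linarith
  have hcast : ((∑ n ∈ Finset.range (2 ^ (M + 1)), a n * n ^ m : ℕ) : ℝ)
      = ∑ n ∈ Finset.range (2 ^ (M + 1)), (a n : ℝ) * (n : ℝ) ^ m := by
    push_cast
    rfl
  calc ∑ n ∈ Finset.range (2 ^ (M + 1)), (n : ℝ) ^ m * ‖SV n‖ ^ 2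
      = ∑ n ∈ Finset.range (2 ^ (M + 1)),
          ((1 - (a n : ℝ)) * (n : ℝ) ^ m * ‖X‖ ^ 2
            + (a n : ℝ) * (n : ℝ) ^ m * ‖Y‖ ^ 2) := by
        apply Finset.sum_congr rfl
        intro n _
        rw [hpt n]
        ring
    _ = (∑ n ∈ Finset.range (2 ^ (M + 1)), (1 - (a n : ℝ)) * (n : ℝ) ^ m)
          * ‖X‖ ^ 2
        + (∑ n ∈ Finset.range (2 ^ (M + 1)), (a n : ℝ) * (n : ℝ) ^ m)
          * ‖Y‖ ^ 2 := by
        rw [Finset.sum_add_distrib, ← Finset.sum_mul, ← Finset.sum_mul]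
    _ = ((∑ n ∈ Finset.range (2 ^ (M + 1)), a n * n ^ m : ℕ) : ℝ)
          * (‖X‖ ^ 2 + ‖Y‖ ^ 2) := by
        rw [hkey, hcast]
        ring
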